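/- Let Q be a (P_4 + sP_2)-saturated graph with matching number exactly s + 1, and let Y ⊆ V(Q) achieve the minimum in the Berge–Tutte formula, i.e., s + 1 = (|Q| + |Y| − o(Q − Y))/2. Then for every component C of Q − Y, the induced subgraph Q[Y ∪ V(C)] is a complete graph. -/

import Mathlib

open SimpleGraph



/-- `H` has an (injective) copy inside `G`, i.e. `G` contains `H` as a subgraph. -/
def IsSubCopy {W V : Type*} (H : SimpleGraph W) (G : SimpleGraph V) : Prop :=
  ∃ f : H →g G, Function.Injective f

/-- `G` is `H`-saturated: it contains no copy of `H`, but adding any missing edge creates one. -/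
def Saturated {V W : Type*} (G : SimpleGraph V) (H : SimpleGraph W) : Prop :=
  ¬ IsSubCopy H G ∧ ∀ v w : V, v ≠ w → ¬ G.Adj v w →
    IsSubCopy H (G ⊔ fromEdgeSet {s(v, w)})

/-- The linear forest `P_k + t·P_2`. -/
def pathMatch (k t : ℕ) : SimpleGraph (Fin k ⊕ Fin t × Fin 2) :=
  fromRel (fun x y =>
    (∃ a b : Fin k, (pathGraph k).Adj a b ∧ x = Sum.inl a ∧ y = Sum.inl b) ∨
    (∃ i : Fin t, x = Sum.inr (i, 0) ∧ y = Sum.inr (i, 1)))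

/-- The book `B_k`: `k` triangles sharing a common edge (vertices `0` and `1`). -/
def bookGraph (k : ℕ) : SimpleGraph (Fin (k + 2)) :=
  fromRel (fun x _ => x = 0 ∨ x = 1)

/-- The fan `F_k`: `k` triangles sharing the common vertex `0`. -/
def fanGraph (k : ℕ) : SimpleGraph (Fin (2 * k + 1)) :=
  fromRel (fun x y => x = 0 ∨ ∃ i < k, (x : ℕ) = 2 * i + 1 ∧ (y : ℕ) = 2 * i + 2)

/-- `K_7 + (t-1)K_3 + m·K_1`. -/
def extremalGraph (t m : ℕ) : SimpleGraph (Fin 7 ⊕ (Fin (t - 1) × Fin 3) ⊕ Fin m) :=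
  fromRel (fun x y =>
    (∃ a b : Fin 7, x = Sum.inl a ∧ y = Sum.inl b) ∨
    (∃ (i : Fin (t - 1)) (a b : Fin 3),
      x = Sum.inr (Sum.inl (i, a)) ∧ y = Sum.inr (Sum.inl (i, b))))

/-- The spider tree `T` on 10 vertices: a center `0` joined to `1,2,3`, each of which
gets two further leaves. -/
def spiderT : SimpleGraph (Fin 10) :=
  fromRel (fun x y => ((x : ℕ), (y : ℕ)) ∈
    [(0,1),(0,2),(0,3),(1,4),(1,5),(2,6),(2,7),(3,8),(3,9)])

/-- A connected component is nontrivial if it contains a non-isolated vertex (i.e. an edge). -/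
def NontrivialComp {V : Type*} (G : SimpleGraph V) (C : G.ConnectedComponent) : Prop :=
  ∃ v ∈ C.supp, v ∈ G.support

section AuxLemmas


lemma reach_sup_edge {V : Type*} {G : SimpleGraph V} {a b : V} (hab : G.Reachable a b)
    {u v : V} (h : (G ⊔ fromEdgeSet {s(a, b)}).Reachable u v) : G.Reachable u v := by
  obtain ⟨w⟩ := h
  induction w with
  | nil => exact Reachable.refl _
  | cons h p ih =>
    refine Reachable.trans ?_ ih
    rcases h with h | h
    · exact h.reachable
    · rw [fromEdgeSet_adj] at h
      simp only [Set.mem_singleton_iff, Sym2.eq, Sym2.rel_iff', Prod.mk.injEq,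
        Prod.swap_prod_mk] at h
      rcases h.1 with ⟨rfl, rfl⟩ | ⟨rfl, rfl⟩
      · exact hab
      · exact hab.symm

def compMap {V : Type*} {G G' : SimpleGraph V}
    (h : ∀ u v, G.Reachable u v → G'.Reachable u v) :
    G.ConnectedComponent → G'.ConnectedComponent :=
  fun C => C.lift (fun v => G'.connectedComponentMk v)
    (fun u v p _ => ConnectedComponent.sound (h u v ⟨p⟩))

@[simp] lemma compMap_mk {V : Type*} {G G' : SimpleGraph V}
    (h : ∀ u v, G.Reachable u v → G'.Reachable u v) (v : V) :
    compMap h (G.connectedComponentMk v) = G'.connectedComponentMk v := rfl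

lemma oddCount_eq {V : Type*} {G G' : SimpleGraph V}
    (h : ∀ u v, G.Reachable u v ↔ G'.Reachable u v) :
    Nat.card {C : G.ConnectedComponent // Odd (Nat.card C.supp)} =
    Nat.card {C : G'.ConnectedComponent // Odd (Nat.card C.supp)} := by
  refine Nat.card_congr (Equiv.subtypeEquiv
    ⟨compMap (fun u v => (h u v).mp), compMap (fun u v => (h u v).mpr),
      fun C => C.ind (fun v => rfl), fun C => C.ind (fun v => rfl)⟩ ?_)
  refine ConnectedComponent.ind ?_
  intro u
  have hsupp : (compMap (fun u v => (h u v).mp) (G.connectedComponentMk u)).supp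
      = (G.connectedComponentMk u).supp := by
    ext v
    simp only [compMap_mk, ConnectedComponent.mem_supp_iff, ConnectedComponent.eq, h]
  simp only [Equiv.coe_fn_mk, hsupp]


lemma matching_verts_ncard {V : Type*} [Fintype V] {G : SimpleGraph V} {M : G.Subgraph}
    (hM : M.IsMatching) : M.verts.ncard = 2 * M.edgeSet.ncard := by
  classical
  set f : V → Sym2 V := fun v =>
    if h : v ∈ M.verts then s(v, (hM h).choose) else s(v, v) with hf
  have hmem : ∀ v ∈ M.verts.toFinset, f v ∈ M.edgeSet.toFinset := by
    intro v hv
    rw [Set.mem_toFinset] at hv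
    rw [Set.mem_toFinset, hf]
    simp only [dif_pos hv]
    exact (hM hv).choose_spec.1
  have hcard := Finset.card_eq_sum_card_fiberwise hmem
  have hfiber : ∀ e ∈ M.edgeSet.toFinset,
      (M.verts.toFinset.filter fun v => f v = e).card = 2 := by
    intro e he
    rw [Set.mem_toFinset] at he
    induction e with
    | _ a b =>
      have hab : M.Adj a b := he
      have hne : a ≠ b := (M.adj_sub hab).ne
      have hfa : f a = s(a, b) := by
        have ha : a ∈ M.verts := M.edge_vert hab
        rw [hf]; simp only [dif_pos ha]
        exact Sym2.congr_right.mpr ((hM ha).choose_spec.2 b hab).symm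
      have hfb : f b = s(a, b) := by
        have hb : b ∈ M.verts := M.edge_vert hab.symm
        rw [hf]; simp only [dif_pos hb]
        rw [((hM hb).choose_spec.2 a hab.symm), Sym2.eq_swap]
      have : (M.verts.toFinset.filter fun v => f v = s(a, b)) = {a, b} := by
        ext v
        simp only [Finset.mem_filter, Set.mem_toFinset, Finset.mem_insert,
          Finset.mem_singleton]
        constructor
        · rintro ⟨hv, hfv⟩
          rw [hf] at hfv
          simp only [dif_pos hv] at hfv
          rw [Sym2.eq_iff] at hfv
          rcases hfv with ⟨rfl, -⟩ | ⟨rfl, -⟩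
          · exact Or.inl rfl
          · exact Or.inr rfl
        · rintro (rfl | rfl)
          · exact ⟨M.edge_vert hab, hfa⟩
          · exact ⟨M.edge_vert hab.symm, hfb⟩
      rw [this, Finset.card_pair hne]
  rw [Finset.sum_congr rfl hfiber, Finset.sum_const, smul_eq_mul] at hcard
  rw [Set.ncard_eq_toFinset_card', Set.ncard_eq_toFinset_card', hcard, Nat.mul_comm]

def pmPartner (s : ℕ) : (Fin 4 ⊕ Fin s × Fin 2) → (Fin 4 ⊕ Fin s × Fin 2)
  | .inl a => .inl (![1, 0, 3, 2] a)
  | .inr (i, j) => .inr (i, ![1, 0] j)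

lemma pmPartner_invol {s : ℕ} (x : Fin 4 ⊕ Fin s × Fin 2) :
    pmPartner s (pmPartner s x) = x := by
  rcases x with a | ⟨i, j⟩
  · fin_cases a <;> rfl
  · fin_cases j <;> rfl

lemma pmPartner_ne {s : ℕ} (x : Fin 4 ⊕ Fin s × Fin 2) : x ≠ pmPartner s x := by
  rcases x with a | ⟨i, j⟩
  · fin_cases a <;> intro h <;> simp [pmPartner, Fin.ext_iff] at h <;>
      exact absurd h (by decide)
  · fin_cases j <;> intro h <;> simp [pmPartner, Fin.ext_iff] at h

lemma pmPartner_adj {s : ℕ} (x : Fin 4 ⊕ Fin s × Fin 2) :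
    (pathMatch 4 s).Adj x (pmPartner s x) := by
  rcases x with a | ⟨i, j⟩
  · fin_cases a
    · exact ⟨pmPartner_ne _, Or.inl (Or.inl ⟨0, 1, pathGraph_adj.mpr (Or.inl rfl), rfl, rfl⟩)⟩
    · exact ⟨pmPartner_ne _, Or.inr (Or.inl ⟨0, 1, pathGraph_adj.mpr (Or.inl rfl), rfl, rfl⟩)⟩
    · exact ⟨pmPartner_ne _, Or.inl (Or.inl ⟨2, 3, pathGraph_adj.mpr (Or.inl rfl), rfl, rfl⟩)⟩
    · exact ⟨pmPartner_ne _, Or.inr (Or.inl ⟨2, 3, pathGraph_adj.mpr (Or.inl rfl), rfl, rfl⟩)⟩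
  · fin_cases j
    · exact ⟨pmPartner_ne _, Or.inl (Or.inr ⟨i, rfl, rfl⟩)⟩
    · exact ⟨pmPartner_ne _, Or.inr (Or.inr ⟨i, rfl, rfl⟩)⟩

lemma copy_matching {V : Type*} [Fintype V] {G : SimpleGraph V} {s : ℕ}
    (h : IsSubCopy (pathMatch 4 s) G) :
    ∃ M : G.Subgraph, M.IsMatching ∧ M.edgeSet.ncard = s + 2 := by
  obtain ⟨f, hf⟩ := h
  refine ⟨⟨Set.range f, fun x y => ∃ u, f u = x ∧ f (pmPartner s u) = y, ?_, ?_, ?_⟩, ?_, ?_⟩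
  · rintro x y ⟨u, rfl, rfl⟩
    exact f.map_adj (pmPartner_adj u)
  · rintro x y ⟨u, rfl, -⟩
    exact ⟨u, rfl⟩
  · constructor; rintro x y ⟨u, rfl, rfl⟩
    exact ⟨pmPartner s u, rfl, by rw [pmPartner_invol]⟩
  · rintro x ⟨u, rfl⟩
    refine ⟨f (pmPartner s u), ⟨u, rfl, rfl⟩, ?_⟩
    rintro y ⟨u', hu', rfl⟩
    rw [hf hu']
  · have hm : (⟨Set.range f, fun x y => ∃ u, f u = x ∧ f (pmPartner s u) = y,
        by rintro x y ⟨u, rfl, rfl⟩; exact f.map_adj (pmPartner_adj u),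
        by rintro x y ⟨u, rfl, -⟩; exact ⟨u, rfl⟩,
        by constructor; rintro x y ⟨u, rfl, rfl⟩;
           exact ⟨pmPartner s u, rfl, by rw [pmPartner_invol]⟩⟩ : G.Subgraph).IsMatching := by
      rintro x ⟨u, rfl⟩
      refine ⟨f (pmPartner s u), ⟨u, rfl, rfl⟩, ?_⟩
      rintro y ⟨u', hu', rfl⟩
      rw [hf hu']
    have hv := matching_verts_ncard hm
    have hr : (Set.range f).ncard = 4 + 2 * s := by
      rw [← Nat.card_coe_set_eq, Nat.card_congr (Equiv.ofInjective f hf).symm]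
      simp [Nat.card_eq_fintype_card, Nat.mul_comm]
    rw [hr] at hv
    omega

lemma berge_easy {V : Type*} [Fintype V] (G : SimpleGraph V) (M : G.Subgraph)
    (hM : M.IsMatching) (S : Set V) :
    2 * M.edgeSet.ncard +
      Nat.card {C : (G.induce (Sᶜ : Set V)).ConnectedComponent // Odd (Nat.card C.supp)}
      ≤ Fintype.card V + S.ncard := by
  classical
  set H := G.induce (Sᶜ : Set V) with hH
  have step1 : ∀ C : H.ConnectedComponent, Odd (Nat.card C.supp) →
      ∃ x : V,
        (x ∉ M.verts ∧ ∃ hx : x ∈ (Sᶜ : Set V), H.connectedComponentMk ⟨x, hx⟩ = C) ∨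
        (x ∈ S ∧ ∃ v, ∃ hv : v ∈ (Sᶜ : Set V), M.Adj x v ∧
          H.connectedComponentMk ⟨v, hv⟩ = C) := by
    intro C hodd
    by_contra hcon
    push_neg at hcon
    have hpart : ∀ v : (Sᶜ : Set V), v ∈ C.supp →
        ∃ w, ∃ hw : w ∈ (Sᶜ : Set V), M.Adj ↑v w ∧ (⟨w, hw⟩ : (Sᶜ : Set V)) ∈ C.supp ∧
          ∀ y, M.Adj ↑v y → y = w := by
      intro v hv
      have hvC : H.connectedComponentMk ⟨(v : V), v.2⟩ = C := by
        rw [ConnectedComponent.mem_supp_iff] at hv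
        rwa [Subtype.coe_eta]
      have hvm : (v : V) ∈ M.verts := by
        by_contra hvm
        exact (hcon (v : V)).1 hvm v.2 hvC
      obtain ⟨w, hw, huniq⟩ := hM hvm
      have hwS : w ∈ (Sᶜ : Set V) := by
        by_contra hws
        rw [Set.notMem_compl_iff] at hws
        exact (hcon w).2 hws (v : V) v.2 (M.adj_symm hw) hvC
      have hadj : H.Adj ⟨(v : V), v.2⟩ ⟨w, hwS⟩ := M.adj_sub hw
      refine ⟨w, hwS, hw, ?_, huniq⟩
      rw [ConnectedComponent.mem_supp_iff]
      exact (ConnectedComponent.connectedComponentMk_eq_of_adj hadj).symm.trans hvC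
    -- build a matching on the component
    set N : G.Subgraph :=
      ⟨Subtype.val '' C.supp,
        fun x y => x ∈ Subtype.val '' C.supp ∧ y ∈ Subtype.val '' C.supp ∧ M.Adj x y,
        fun h => M.adj_sub h.2.2, fun h => h.1,
        ⟨fun x y h => ⟨h.2.1, h.1, M.adj_symm h.2.2⟩⟩⟩ with hN
    have hNm : N.IsMatching := by
      rintro x ⟨v, hv, rfl⟩
      obtain ⟨w, hwS, hadj, hwC, huniq⟩ := hpart v hv
      refine ⟨w, ⟨⟨v, hv, rfl⟩, ⟨⟨w, hwS⟩, hwC, rfl⟩, hadj⟩, ?_⟩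
      rintro y ⟨-, -, hy⟩
      exact huniq y hy
    have heven := matching_verts_ncard hNm
    have hcardeq : Nat.card C.supp = N.verts.ncard := by
      rw [hN]
      simp only
      rw [Set.ncard_image_of_injective _ Subtype.val_injective,
        Nat.card_coe_set_eq]
    rw [hcardeq, heven] at hodd
    obtain ⟨k, hk⟩ := hodd
    omega
  -- Step 2: injection from odd components
  set g : {C : H.ConnectedComponent // Odd (Nat.card C.supp)} → ↥((M.vertsᶜ ∪ S : Set V)) :=
    fun C => ⟨(step1 C.1 C.2).choose, by
      rcases (step1 C.1 C.2).choose_spec with ⟨h1, -⟩ | ⟨h1, -⟩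
      · exact Or.inl h1
      · exact Or.inr h1⟩ with hg
  have ginj : Function.Injective g := by
    intro C1 C2 h
    have hval : (step1 C1.1 C1.2).choose = (step1 C2.1 C2.2).choose := congrArg Subtype.val h
    rcases (step1 C1.1 C1.2).choose_spec with ⟨hm1, hx1, hC1⟩ | ⟨hs1, v1, hv1, hadj1, hC1⟩ <;>
      rcases (step1 C2.1 C2.2).choose_spec with ⟨hm2, hx2, hC2⟩ | ⟨hs2, v2, hv2, hadj2, hC2⟩
    · refine Subtype.ext ?_
      rw [← hC1, ← hC2]
      congr 1
      exact Subtype.ext hval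
    · exact absurd (M.edge_vert (hval ▸ hadj2)) hm1
    · exact absurd (M.edge_vert (hval ▸ hadj1)) hm2
    · obtain ⟨w, hw, huniq⟩ := hM (M.edge_vert hadj1)
      have h1 : v1 = w := huniq v1 hadj1
      have h2 : v2 = w := huniq v2 (hval ▸ hadj2)
      refine Subtype.ext ?_
      rw [← hC1, ← hC2]
      congr 1
      exact Subtype.ext (h1.trans h2.symm)
  have hle : Nat.card {C : H.ConnectedComponent // Odd (Nat.card C.supp)}
      ≤ (M.vertsᶜ ∪ S : Set V).ncard := by
    rw [← Nat.card_coe_set_eq]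
    exact Nat.card_le_card_of_injective g ginj
  have hunion : (M.vertsᶜ ∪ S : Set V).ncard ≤ M.vertsᶜ.ncard + S.ncard :=
    Set.ncard_union_le _ _
  have hcompl : M.verts.ncard + M.vertsᶜ.ncard = Fintype.card V := by
    rw [Set.ncard_add_ncard_compl, Nat.card_eq_fintype_card]
  have hverts := matching_verts_ncard hM
  omega

end AuxLemmas

/-- Claim 1 in Theorem 5: let `Q` be `(P_4 + sP_2)`-saturated with matching number
exactly `s + 1`, and let `Y` attain the minimum in the Berge–Tutte formula, i.e.
`2(s + 1) = |Q| + |Y| - o(Q - Y)`. Then for every component `C` of `Q - Y`, the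
induced subgraph `Q[Y ∪ V(C)]` is complete. -/

theorem statement15 {V : Type*} [Fintype V] (Q : SimpleGraph V) (s : ℕ)
    (hsat : Saturated Q (pathMatch 4 s))
    (hmatch : ∃ M : Q.Subgraph, M.IsMatching ∧ M.edgeSet.ncard = s + 1)
    (hmax : ∀ M : Q.Subgraph, M.IsMatching → M.edgeSet.ncard ≤ s + 1)
    (Y : Set V)
    (hY : 2 * (s + 1) +
        Nat.card {C : (Q.induce (Yᶜ : Set V)).ConnectedComponent // Odd (Nat.card C.supp)}
      = Fintype.card V + Y.ncard) :
    ∀ C : (Q.induce (Yᶜ : Set V)).ConnectedComponent,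
      ∀ x ∈ Y ∪ (Subtype.val '' C.supp), ∀ y ∈ Y ∪ (Subtype.val '' C.supp),
        x ≠ y → Q.Adj x y := by
  intro C x hx y hy hxy
  by_contra hadj
  obtain ⟨-, hsat2⟩ := hsat
  have hcopy := hsat2 x y hxy hadj
  obtain ⟨M, hMm, hMc⟩ := copy_matching hcopy
  have hreach : ∀ u v : (Yᶜ : Set V),
      ((Q ⊔ fromEdgeSet {s(x, y)}).induce (Yᶜ : Set V)).Reachable u v ↔
      (Q.induce (Yᶜ : Set V)).Reachable u v := by
    intro u v
    constructor
    · intro h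
      by_cases hcase : x ∈ Y ∨ y ∈ Y
      · have heq : (Q ⊔ fromEdgeSet {s(x, y)}).induce (Yᶜ : Set V)
            = Q.induce (Yᶜ : Set V) := by
          ext a b
          simp only [comap_adj, Function.Embedding.coe_subtype, sup_adj, fromEdgeSet_adj,
            Set.mem_singleton_iff, ne_eq, Sym2.eq, Sym2.rel_iff', Prod.mk.injEq,
            Prod.swap_prod_mk]
          constructor
          · rintro (h | ⟨(⟨h1, h2⟩ | ⟨h1, h2⟩), -⟩)
            · exact h
            · exfalso
              rcases hcase with hc | hc
              · exact a.2 (h1 ▸ hc)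
              · exact b.2 (h2 ▸ hc)
            · exfalso
              rcases hcase with hc | hc
              · exact b.2 (h2 ▸ hc)
              · exact a.2 (h1 ▸ hc)
          · exact Or.inl
        rwa [heq] at h
      · push_neg at hcase
        have hx' : x ∈ Subtype.val '' C.supp := hx.resolve_left hcase.1
        have hy' : y ∈ Subtype.val '' C.supp := hy.resolve_left hcase.2
        obtain ⟨x', hx'C, rfl⟩ := hx'
        obtain ⟨y', hy'C, rfl⟩ := hy'
        have hxyreach : (Q.induce (Yᶜ : Set V)).Reachable x' y' := by
          rw [ConnectedComponent.mem_supp_iff] at hx'C hy'C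
          exact ConnectedComponent.exact (hx'C.trans hy'C.symm)
        refine reach_sup_edge hxyreach (Reachable.mono ?_ h)
        intro a b hab
        rcases hab with hab | hab
        · exact Or.inl hab
        · refine Or.inr ?_
          rw [fromEdgeSet_adj] at hab ⊢
          simp only [Set.mem_singleton_iff, Sym2.eq, Sym2.rel_iff', Prod.mk.injEq,
            Prod.swap_prod_mk] at hab ⊢
          obtain ⟨hab1, hab2⟩ := hab
          refine ⟨?_, fun hc => hab2 (congrArg Subtype.val hc)⟩
          rcases hab1 with ⟨h1, h2⟩ | ⟨h1, h2⟩
          · exact Or.inl ⟨Subtype.ext h1, Subtype.ext h2⟩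
          · exact Or.inr ⟨Subtype.ext h1, Subtype.ext h2⟩
    · intro h
      exact h.mono (fun a b hab => Or.inl hab)
  have hodd := oddCount_eq hreach
  have hberge := berge_easy (Q ⊔ fromEdgeSet {s(x, y)}) M hMm Y
  rw [hMc, hodd] at hberge
  omega
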